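/- In the binary monopoly model, the optimal-price function p satisfies p(0) = p_L* and p(1) = p_H*, is continuously differentiable on (0,1) with p'(μ) = (R_L'(p(μ)) − R_H'(p(μ))) / ((1−μ)·R_L''(p(μ)) + μ·R_H''(p(μ))), and p'(μ) > 0 for every μ ∈ (0,1). -/

import Mathlib

lemma aux_smooth {I : Set ℝ} (hI : IsOpen I) {R : ℝ → ℝ}
    (h : ContDiffOn ℝ 2 R I) :
    ContinuousOn (deriv R) I ∧ (∀ q ∈ I, HasDerivAt (deriv R) (deriv (deriv R) q) q)
      ∧ ContinuousOn (deriv (deriv R)) I := by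
  have h2 : ContDiffOn ℝ (1+1) R I := by norm_num; exact h
  rw [contDiffOn_succ_iff_deriv_of_isOpen hI] at h2
  obtain ⟨-, -, h1⟩ := h2
  have h1' : ContDiffOn ℝ (0+1) (deriv R) I := by norm_num; exact h1
  rw [contDiffOn_succ_iff_deriv_of_isOpen hI] at h1'
  obtain ⟨hd, -, hc⟩ := h1'
  exact ⟨h1.continuousOn, fun q hq => (hd.differentiableAt (hI.mem_nhds hq)).hasDerivAt,
    hc.continuousOn⟩

theorem stmt_1
    (I : Set ℝ) (DL DH RL RH : ℝ → ℝ) (pLs pHs : ℝ)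
    (hIopen : IsOpen I) (hIconv : Convex ℝ I) (hIpos : I ⊆ Set.Ioi (0:ℝ))
    (hRL : RL = fun q => q * DL q) (hRH : RH = fun q => q * DH q)
    (hDL : ContDiffOn ℝ 2 DL I) (hDH : ContDiffOn ℝ 2 DH I)
    (hDLpos : ∀ q ∈ I, 0 < DL q) (hDHpos : ∀ q ∈ I, 0 < DH q)
    (hDL' : ∀ q ∈ I, deriv DL q < 0) (hDH' : ∀ q ∈ I, deriv DH q < 0)
    (hRL'' : ∀ q ∈ I, deriv (deriv RL) q < 0) (hRH'' : ∀ q ∈ I, deriv (deriv RH) q < 0)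
    (hpLs : pLs ∈ I) (hpHs : pHs ∈ I) (hlt : pLs < pHs)
    (hRL' : deriv RL pLs = 0) (hRH' : deriv RH pHs = 0)
    (p : ℝ → ℝ)
    (hp : ∀ μ ∈ Set.Icc (0:ℝ) 1, p μ ∈ Set.Icc pLs pHs ∧
      (1 - μ) * deriv RL (p μ) + μ * deriv RH (p μ) = 0) :
    p 0 = pLs ∧ p 1 = pHs ∧ ContDiffOn ℝ 1 p (Set.Ioo 0 1) ∧
    ∀ μ ∈ Set.Ioo (0:ℝ) 1,
      deriv p μ = (deriv RL (p μ) - deriv RH (p μ)) /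
        ((1 - μ) * deriv (deriv RL) (p μ) + μ * deriv (deriv RH) (p μ)) ∧
      0 < deriv p μ := by
  have hIcc : Set.Icc pLs pHs ⊆ I := hIconv.ordConnected.out hpLs hpHs
  set fL := deriv RL with hfL
  set fH := deriv RH with hfH
  set gL := deriv (deriv RL) with hgL
  set gH := deriv (deriv RH) with hgH
  obtain ⟨hcL, hdL, hcL2⟩ := aux_smooth hIopen (show ContDiffOn ℝ 2 RL I by
    rw [hRL]; exact contDiffOn_id.mul hDL)
  obtain ⟨hcH, hdH, hcH2⟩ := aux_smooth hIopen (show ContDiffOn ℝ 2 RH I by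
    rw [hRH]; exact contDiffOn_id.mul hDH)
  -- strict antitonicity of fL, fH on I
  have hfLanti : StrictAntiOn fL I :=
    strictAntiOn_of_deriv_neg hIconv hcL
      (fun x hx => hRL'' x (by rwa [hIopen.interior_eq] at hx))
  have hfHanti : StrictAntiOn fH I :=
    strictAntiOn_of_deriv_neg hIconv hcH
      (fun x hx => hRH'' x (by rwa [hIopen.interior_eq] at hx))
  -- sign facts on Icc
  have hfLlt : ∀ q ∈ Set.Icc pLs pHs, pLs < q → fL q < 0 := by
    intro q hq h
    have := hfLanti hpLs (hIcc hq) h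
    rwa [hRL'] at this
  have hfHlt : ∀ q ∈ Set.Icc pLs pHs, q < pHs → 0 < fH q := by
    intro q hq h
    have := hfHanti (hIcc hq) hpHs h
    rwa [hRH'] at this
  have hfLle : ∀ q ∈ Set.Icc pLs pHs, fL q ≤ 0 := by
    intro q hq
    rcases eq_or_lt_of_le hq.1 with h | h
    · rw [← h]; exact le_of_eq hRL'
    · exact le_of_lt (hfLlt q hq h)
  have hfHle : ∀ q ∈ Set.Icc pLs pHs, 0 ≤ fH q := by
    intro q hq
    rcases eq_or_lt_of_le hq.2 with h | h
    · rw [h]; exact le_of_eq hRH'.symm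
    · exact le_of_lt (hfHlt q hq h)
  have hD : ∀ q ∈ Set.Icc pLs pHs, fL q - fH q < 0 := by
    intro q hq
    rcases eq_or_lt_of_le hq.1 with h | h
    · have := hfHlt q hq (h ▸ hlt)
      have h0 : fL q = 0 := by rw [← h]; exact hRL'
      linarith
    · linarith [hfLlt q hq h, hfHle q hq]
  -- endpoint values
  have hp0 : p 0 = pLs := by
    obtain ⟨hm, he⟩ := hp 0 (by norm_num)
    have h0 : fL (p 0) = 0 := by linarith [he]
    by_contra h
    exact absurd h0 (ne_of_lt (hfLlt _ hm (lt_of_le_of_ne hm.1 (Ne.symm h))))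
  have hp1 : p 1 = pHs := by
    obtain ⟨hm, he⟩ := hp 1 (by norm_num)
    have h0 : fH (p 1) = 0 := by linarith [he]
    by_contra h
    exact absurd h0 (ne_of_gt (hfHlt _ hm (lt_of_le_of_ne hm.2 h)))
  -- interior values
  have hint : ∀ μ ∈ Set.Ioo (0:ℝ) 1, p μ ∈ Set.Ioo pLs pHs := by
    intro μ hμ
    obtain ⟨hm, he⟩ := hp μ (Set.Ioo_subset_Icc_self hμ)
    obtain ⟨hμ0, hμ1⟩ := hμ
    constructor
    · rcases eq_or_lt_of_le hm.1 with h | h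
      · exfalso
        have h1 : fL (p μ) = 0 := by rw [← h]; exact hRL'
        have h2 : 0 < fH (p μ) := hfHlt _ hm (h ▸ hlt)
        nlinarith
      · exact h
    · rcases eq_or_lt_of_le hm.2 with h | h
      · exfalso
        have h1 : fH (p μ) = 0 := by rw [h]; exact hRH'
        have h2 : fL (p μ) < 0 := hfLlt _ hm (h ▸ hlt)
        nlinarith
      · exact h
  -- the inverse function φ
  set φ : ℝ → ℝ := fun q => fL q / (fL q - fH q) with hφdef
  have hφp : ∀ μ ∈ Set.Icc (0:ℝ) 1, φ (p μ) = μ := by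
    intro μ hμ
    obtain ⟨hm, he⟩ := hp μ hμ
    have hd := hD _ hm
    show fL (p μ) / (fL (p μ) - fH (p μ)) = μ
    rw [div_eq_iff (ne_of_lt hd)]
    linear_combination he
  have hφcont : ContinuousOn φ (Set.Icc pLs pHs) :=
    (hcL.mono hIcc).div ((hcL.sub hcH).mono hIcc) (fun q hq => ne_of_lt (hD q hq))
  have hφ' : ∀ q ∈ Set.Ioo pLs pHs,
      HasDerivAt φ ((fL q * gH q - fH q * gL q) / (fL q - fH q)^2) q := by
    intro q hq
    have hqI : q ∈ I := hIcc (Set.Ioo_subset_Icc_self hq)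
    have h1 := hdL q hqI
    have h2 := hdH q hqI
    have hd := hD q (Set.Ioo_subset_Icc_self hq)
    have := (h1.div (h1.sub h2) (ne_of_lt hd))
    refine this.congr_deriv ?_
    simp only [Pi.sub_apply]; ring
  have hN : ∀ q ∈ Set.Ioo pLs pHs, 0 < fL q * gH q - fH q * gL q := by
    intro q hq
    have hqI : q ∈ I := hIcc (Set.Ioo_subset_Icc_self hq)
    have h1 := hfLlt q (Set.Ioo_subset_Icc_self hq) hq.1
    have h2 := hfHlt q (Set.Ioo_subset_Icc_self hq) hq.2
    have h3 := hRL'' q hqI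
    have h4 := hRH'' q hqI
    nlinarith
  have hφmono : StrictMonoOn φ (Set.Icc pLs pHs) := by
    apply strictMonoOn_of_deriv_pos (convex_Icc _ _) hφcont
    intro x hx
    rw [interior_Icc] at hx
    rw [(hφ' x hx).deriv]
    have hd := hD x (Set.Ioo_subset_Icc_self hx)
    have : (0:ℝ) < (fL x - fH x)^2 := by nlinarith [hd]
    exact div_pos (hN x hx) this
  -- continuity of p on the open interval
  have hpcont : ∀ μ ∈ Set.Ioo (0:ℝ) 1, ContinuousAt p μ := by
    intro μ₀ hμ₀
    have hq₀ : p μ₀ ∈ Set.Ioo pLs pHs := hint μ₀ hμ₀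
    have hφq₀ : φ (p μ₀) = μ₀ := hφp μ₀ (Set.Ioo_subset_Icc_self hμ₀)
    rw [Metric.continuousAt_iff]
    intro ε hε
    set q₀ := p μ₀ with hq₀def
    set a := max (q₀ - ε/2) ((pLs + q₀)/2) with ha
    set b := min (q₀ + ε/2) ((q₀ + pHs)/2) with hb
    have haIcc : a ∈ Set.Icc pLs pHs := by
      constructor
      · rw [ha, le_max_iff]; right; linarith [hq₀.1]
      · rw [ha, max_le_iff]
        exact ⟨by linarith [hq₀.2], by linarith [hq₀.2]⟩
    have hbIcc : b ∈ Set.Icc pLs pHs := by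
      constructor
      · rw [hb, le_min_iff]
        exact ⟨by linarith [hq₀.1], by linarith [hq₀.1]⟩
      · rw [hb, min_le_iff]; right; linarith [hq₀.2]
    have haq : a < q₀ := max_lt (by linarith) (by linarith [hq₀.1])
    have hqb : q₀ < b := lt_min (by linarith) (by linarith [hq₀.2])
    have hφa : φ a < μ₀ := by
      have := hφmono haIcc (Set.Ioo_subset_Icc_self hq₀) haq
      rwa [hφq₀] at this
    have hφb : μ₀ < φ b := by
      have := hφmono (Set.Ioo_subset_Icc_self hq₀) hbIcc hqb
      rwa [hφq₀] at this
    set δ := min (min (μ₀ - φ a) (φ b - μ₀)) (min μ₀ (1 - μ₀)) with hδdef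
    have hδ1 : δ ≤ μ₀ - φ a := le_trans (min_le_left _ _) (min_le_left _ _)
    have hδ2 : δ ≤ φ b - μ₀ := le_trans (min_le_left _ _) (min_le_right _ _)
    have hδ3 : δ ≤ μ₀ := le_trans (min_le_right _ _) (min_le_left _ _)
    have hδ4 : δ ≤ 1 - μ₀ := le_trans (min_le_right _ _) (min_le_right _ _)
    refine ⟨δ, by
      rw [hδdef]
      simp only [lt_min_iff]
      exact ⟨⟨by linarith, by linarith⟩, hμ₀.1, by linarith [hμ₀.2]⟩, ?_⟩
    intro x hx
    rw [Real.dist_eq, abs_lt] at hx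
    obtain ⟨hxl, hxr⟩ := hx
    have hx01 : x ∈ Set.Icc (0:ℝ) 1 := ⟨by linarith, by linarith⟩
    have hxm := (hp x hx01).1
    have hφx : φ (p x) = x := hφp x hx01
    have h1 : a < p x := by
      by_contra h
      push_neg at h
      have := (hφmono.monotoneOn) hxm haIcc h
      rw [hφx] at this
      linarith
    have h2 : p x < b := by
      by_contra h
      push_neg at h
      have := (hφmono.monotoneOn) hbIcc hxm h
      rw [hφx] at this
      linarith
    rw [Real.dist_eq, abs_lt]
    constructor
    · have : q₀ - ε/2 ≤ a := le_max_left _ _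
      linarith
    · have : b ≤ q₀ + ε/2 := min_le_left _ _
      linarith
  -- derivative of p via local inverse
  have hkey : ∀ μ ∈ Set.Ioo (0:ℝ) 1,
      HasDerivAt p
        (((fL (p μ) * gH (p μ) - fH (p μ) * gL (p μ)) / (fL (p μ) - fH (p μ))^2))⁻¹ μ := by
    intro μ hμ
    have hq := hint μ hμ
    have hd := hD _ (Set.Ioo_subset_Icc_self hq)
    refine HasDerivAt.of_local_left_inverse (hpcont μ hμ) (hφ' _ hq)
      (ne_of_gt (div_pos (hN _ hq) (by nlinarith [hd]))) ?_
    filter_upwards [isOpen_Ioo.mem_nhds hμ] with y hy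
    exact hφp y (Set.Ioo_subset_Icc_self hy)
  have hmain : ∀ μ ∈ Set.Ioo (0:ℝ) 1,
      deriv p μ = (fL (p μ) - fH (p μ)) / ((1 - μ) * gL (p μ) + μ * gH (p μ)) ∧
        0 < deriv p μ := by
    intro μ hμ
    have hq := hint μ hμ
    have hqc := Set.Ioo_subset_Icc_self hq
    have hd := hD _ hqc
    have hn := hN _ hq
    have he := (hp μ (Set.Ioo_subset_Icc_self hμ)).2
    have hder := (hkey μ hμ).deriv
    have hden : ((1 - μ) * gL (p μ) + μ * gH (p μ)) * (fL (p μ) - fH (p μ))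
        = fL (p μ) * gH (p μ) - fH (p μ) * gL (p μ) := by
      linear_combination (gL (p μ) - gH (p μ)) * he
    have hS : (1 - μ) * gL (p μ) + μ * gH (p μ) ≠ 0 := by
      intro h
      rw [h, zero_mul] at hden
      linarith
    constructor
    · rw [hder, inv_div, div_eq_div_iff (ne_of_gt hn) hS]
      linear_combination (fL (p μ) - fH (p μ)) * hden
    · rw [hder]
      exact inv_pos.mpr (div_pos hn (by nlinarith [hd]))
  have hC1 : ContDiffOn ℝ 1 p (Set.Ioo 0 1) := by
    have h01 : (1 : WithTop ℕ∞) = 0 + 1 := by norm_num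
    rw [h01, contDiffOn_succ_iff_deriv_of_isOpen isOpen_Ioo]
    refine ⟨fun μ hμ => ((hkey μ hμ).differentiableAt).differentiableWithinAt, by simp, ?_⟩
    rw [contDiffOn_zero]
    have hpc : ContinuousOn p (Set.Ioo 0 1) := fun μ hμ => (hpcont μ hμ).continuousWithinAt
    have hmaps : Set.MapsTo p (Set.Ioo (0:ℝ) 1) I :=
      fun μ hμ => hIcc (Set.Ioo_subset_Icc_self (hint μ hμ))
    have hcomp : ∀ (G : ℝ → ℝ), ContinuousOn G I →
        ContinuousOn (fun μ => G (p μ)) (Set.Ioo (0:ℝ) 1) :=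
      fun G hG => hG.comp hpc hmaps
    refine ContinuousOn.congr
      (f := fun μ => ((fL (p μ) * gH (p μ) - fH (p μ) * gL (p μ)) / (fL (p μ) - fH (p μ))^2)⁻¹)
      ?_ (fun μ hμ => (hkey μ hμ).deriv)
    refine ContinuousOn.inv₀ ?_ ?_
    · exact (((hcomp _ hcL).mul (hcomp _ hcH2)).sub ((hcomp _ hcH).mul (hcomp _ hcL2))).div
        (((hcomp _ hcL).sub (hcomp _ hcH)).pow 2)
        (fun μ hμ => pow_ne_zero 2 (ne_of_lt (hD _ (Set.Ioo_subset_Icc_self (hint μ hμ)))))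
    · intro μ hμ
      exact ne_of_gt (div_pos (hN _ (hint μ hμ))
        (by nlinarith [hD _ (Set.Ioo_subset_Icc_self (hint μ hμ))]))
  exact ⟨hp0, hp1, hC1, hmain⟩
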